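/- Let m ≤ n and let C ∈ ℝ^{n×n} be symmetric positive definite. Then the cost S₃ is coercive: for every c ∈ ℝ there exists R > 0 such that for every W ∈ ℝ^{m×n} and every symmetric positive semidefinite N ∈ ℝ^{m×m} with N³ = W C Wᵀ, if ‖W‖_F ≥ R then 2‖W‖_F² − 3‖N‖_F² ≥ c. -/

import Mathlib

open Matrix Finset

/-- Squared Frobenius norm `‖A‖_F² = tr(AᵀA)`. -/
noncomputable def frobSq {k l : ℕ} (A : Matrix (Fin k) (Fin l) ℝ) : ℝ := (Aᵀ * A).trace

lemma trace_as_prod {k l : ℕ} (A B : Matrix (Fin k) (Fin l) ℝ) :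
    (Aᵀ * B).trace = ∑ p : Fin l × Fin k, A p.2 p.1 * B p.2 p.1 := by
  rw [Fintype.sum_prod_type]
  simp [Matrix.trace, Matrix.diag, Matrix.mul_apply]

lemma trace_CS {k l : ℕ} (A B : Matrix (Fin k) (Fin l) ℝ) :
    (Aᵀ * B).trace ^ 2 ≤ (Aᵀ * A).trace * (Bᵀ * B).trace := by
  rw [trace_as_prod, trace_as_prod, trace_as_prod]
  have := Finset.sum_mul_sq_le_sq_mul_sq Finset.univ
    (fun p : Fin l × Fin k => A p.2 p.1) (fun p : Fin l × Fin k => B p.2 p.1)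
  simpa [sq] using this

lemma frobSq_nonneg {k l : ℕ} (A : Matrix (Fin k) (Fin l) ℝ) : 0 ≤ frobSq A := by
  rw [frobSq, trace_as_prod]
  exact Finset.sum_nonneg fun p _ => mul_self_nonneg _

lemma col_sq_le_frobSq {k l : ℕ} (A : Matrix (Fin k) (Fin l) ℝ) (j : Fin l) :
    ∑ i, A i j ^ 2 ≤ frobSq A := by
  rw [frobSq, trace_as_prod, Fintype.sum_prod_type]
  refine le_trans ?_ (Finset.single_le_sum (f := fun j' => ∑ i, A i j' * A i j')
    (fun j' _ => Finset.sum_nonneg fun i _ => mul_self_nonneg _) (mem_univ j))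
  simp [sq]

lemma trace_sq_leAux {μ : ℕ} (N : Matrix (Fin μ) (Fin μ) ℝ) :
    N.trace ^ 2 ≤ (μ : ℝ) * frobSq N := by
  have h1 : N.trace ^ 2 ≤ (μ : ℝ) * ∑ i, N i i ^ 2 := by
    have := sq_sum_le_card_mul_sum_sq (s := (Finset.univ : Finset (Fin μ)))
      (f := fun i => N i i)
    simpa [Matrix.trace, Matrix.diag] using this
  refine h1.trans (mul_le_mul_of_nonneg_left ?_ (Nat.cast_nonneg μ))
  calc ∑ i, N i i ^ 2 ≤ ∑ j, ∑ i, N i j ^ 2 := by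
        refine Finset.sum_le_sum fun j _ => ?_
        exact Finset.single_le_sum (f := fun i => N i j ^ 2)
          (fun i _ => sq_nonneg _) (mem_univ j)
      _ = frobSq N := by
        rw [frobSq, trace_as_prod, Fintype.sum_prod_type]
        simp [sq]

open scoped MatrixOrder in
lemma frobSq_sq_le {μ : ℕ} {N : Matrix (Fin μ) (Fin μ) ℝ} (hN : N.PosSemidef) :
    frobSq N ^ 2 ≤ N.trace * (N ^ 3).trace := by
  set Q := CFC.sqrt N with hQdef
  have hQps : Q.PosSemidef := (CFC.sqrt_nonneg N).posSemidef
  have hQsymm : Qᵀ = Q := by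
    rw [← Matrix.conjTranspose_eq_transpose_of_trivial]; exact hQps.1
  have hQQ : Q * Q = N := CFC.sqrt_mul_sqrt_self N hN.nonneg
  have hNsymm : Nᵀ = N := by
    rw [← Matrix.conjTranspose_eq_transpose_of_trivial]; exact hN.1
  have h1 : (Qᵀ * (Q * N)).trace = frobSq N := by
    rw [hQsymm, ← Matrix.mul_assoc, hQQ, frobSq, hNsymm]
  have h2 : (Qᵀ * Q).trace = N.trace := by rw [hQsymm, hQQ]
  have h3 : ((Q * N)ᵀ * (Q * N)).trace = (N ^ 3).trace := by
    rw [Matrix.transpose_mul, hQsymm, hNsymm]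
    calc (N * Q * (Q * N)).trace = (N * (Q * Q * N)).trace := by
          rw [Matrix.mul_assoc, ← Matrix.mul_assoc Q Q N]
      _ = (N ^ 3).trace := by
          rw [hQQ]
          congr 1
          rw [pow_succ, pow_two, Matrix.mul_assoc]
  have := trace_CS Q (Q * N)
  rw [h1, h2, h3] at this
  exact this

lemma sum_rot {m n : ℕ} (F : Fin m → Fin n → Fin n → ℝ) :
    ∑ i, ∑ k, ∑ j, F i k j = ∑ j, ∑ k, ∑ i, F i k j := by
  calc ∑ i, ∑ k, ∑ j, F i k j = ∑ i, ∑ j, ∑ k, F i k j :=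
        Finset.sum_congr rfl fun i _ => Finset.sum_comm
    _ = ∑ j, ∑ i, ∑ k, F i k j := Finset.sum_comm
    _ = ∑ j, ∑ k, ∑ i, F i k j := Finset.sum_congr rfl fun j _ => Finset.sum_comm

lemma trace_WCWt_leAux {m n : ℕ} (W : Matrix (Fin m) (Fin n) ℝ) (C : Matrix (Fin n) (Fin n) ℝ) :
    (W * C * Wᵀ).trace ≤ (∑ j, ∑ k, |C j k|) * frobSq W := by
  have hx : ∀ j k : Fin n, |∑ i, W i j * W i k| ≤ frobSq W := by
    intro j k
    calc |∑ i, W i j * W i k| ≤ ∑ i, |W i j * W i k| := Finset.abs_sum_le_sum_abs _ _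
      _ ≤ ∑ i, (W i j ^ 2 + W i k ^ 2) / 2 := by
          refine Finset.sum_le_sum fun i _ => ?_
          rw [abs_mul]
          nlinarith [sq_nonneg (|W i j| - |W i k|), sq_abs (W i j), sq_abs (W i k)]
      _ = ((∑ i, W i j ^ 2) + ∑ i, W i k ^ 2) / 2 := by
          rw [← Finset.sum_div, Finset.sum_add_distrib]
      _ ≤ (frobSq W + frobSq W) / 2 := by
          gcongr
          exacts [col_sq_le_frobSq W j, col_sq_le_frobSq W k]
      _ = frobSq W := by ring
  have htr : (W * C * Wᵀ).trace = ∑ j, ∑ k, C j k * ∑ i, W i j * W i k := by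
    calc (W * C * Wᵀ).trace = ∑ i, ∑ k, ∑ j, W i j * C j k * W i k := by
          simp [Matrix.trace, Matrix.diag, Matrix.mul_apply, Finset.sum_mul]
      _ = ∑ j, ∑ k, ∑ i, W i j * C j k * W i k := sum_rot _
      _ = ∑ j, ∑ k, C j k * ∑ i, W i j * W i k := by
          refine Finset.sum_congr rfl fun j _ => Finset.sum_congr rfl fun k _ => ?_
          rw [Finset.mul_sum]
          exact Finset.sum_congr rfl fun i _ => by ring
  rw [htr, Finset.sum_mul]
  refine Finset.sum_le_sum fun j _ => ?_
  rw [Finset.sum_mul]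
  refine Finset.sum_le_sum fun k _ => ?_
  calc C j k * ∑ i, W i j * W i k ≤ |C j k * ∑ i, W i j * W i k| := le_abs_self _
    _ = |C j k| * |∑ i, W i j * W i k| := abs_mul _ _
    _ ≤ |C j k| * frobSq W := mul_le_mul_of_nonneg_left (hx j k) (abs_nonneg _)

lemma psd_trace_nonneg {μ : ℕ} {N : Matrix (Fin μ) (Fin μ) ℝ} (hN : N.PosSemidef) :
    0 ≤ N.trace := by
  refine Finset.sum_nonneg fun i _ => ?_
  exact hN.diag_nonneg

lemma frobSq_eq {k l : ℕ} (A : Matrix (Fin k) (Fin l) ℝ) :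
    (Aᵀ * A).trace = frobSq A := rfl

/-- coercivity of the third-level cost
`S₃(W) = 2‖W‖_F² − 3‖(W C Wᵀ)^{1/3}‖_F²`. -/
theorem third_level_cost_coercive
    {m n : ℕ} (hmn : m ≤ n)
    (C : Matrix (Fin n) (Fin n) ℝ) (hC : C.PosDef) :
    ∀ c : ℝ, ∃ R : ℝ, 0 < R ∧
      ∀ (W : Matrix (Fin m) (Fin n) ℝ) (N : Matrix (Fin m) (Fin m) ℝ),
        N.PosSemidef → N ^ 3 = W * C * Wᵀ →
        R ≤ Real.sqrt (frobSq W) →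
        c ≤ 2 * frobSq W - 3 * frobSq N := by
  intro c
  set K : ℝ := ∑ j, ∑ k, |C j k| with hK
  have hKnn : 0 ≤ K := Finset.sum_nonneg fun j _ => Finset.sum_nonneg fun k _ => abs_nonneg _
  have hApos : (0:ℝ) < 27 * (m : ℝ) * K ^ 2 + |c| + 1 := by positivity
  refine ⟨Real.sqrt (27 * (m : ℝ) * K ^ 2 + |c| + 1), Real.sqrt_pos.mpr hApos, ?_⟩
  intro W N hN hcube hR
  have hxnn : 0 ≤ frobSq W := frobSq_nonneg W
  have hxA : 27 * (m : ℝ) * K ^ 2 + |c| + 1 ≤ frobSq W := by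
    have h := mul_self_le_mul_self (Real.sqrt_nonneg _) hR
    rwa [Real.mul_self_sqrt hApos.le, Real.mul_self_sqrt hxnn] at h
  set x := frobSq W with hx
  set s := frobSq N with hs
  have hsnn : 0 ≤ s := frobSq_nonneg N
  have htnn : 0 ≤ (N ^ 3).trace := psd_trace_nonneg (hN.pow 3)
  have htK : (N ^ 3).trace ≤ K * x := by rw [hcube]; exact trace_WCWt_leAux W C
  have h1 : s ^ 2 ≤ N.trace * (N ^ 3).trace := frobSq_sq_le hN
  have h2 : N.trace ^ 2 ≤ (m : ℝ) * s := trace_sq_leAux N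
  have hann : 0 ≤ N.trace := psd_trace_nonneg hN
  set t := (N ^ 3).trace with ht
  have hmnn : (0:ℝ) ≤ (m : ℝ) := Nat.cast_nonneg m
  clear_value x s t
  clear hcube hR hx hs ht
  have h4 : s ^ 4 ≤ (m : ℝ) * s * t ^ 2 := by nlinarith
  have h5 : s ^ 3 ≤ (m : ℝ) * t ^ 2 := by
    rcases eq_or_lt_of_le hsnn with h | h
    · rw [← h]
      simpa using mul_nonneg hmnn (sq_nonneg t)
    · nlinarith
  have hKx : 0 ≤ K * x := mul_nonneg hKnn hxnn
  have h6 : s ^ 3 ≤ (m : ℝ) * K ^ 2 * x ^ 2 := by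
    nlinarith [mul_le_mul htK htK htnn hKx]
  have h7 : 27 * ((m : ℝ) * K ^ 2) ≤ x := by
    have := abs_nonneg c; linarith
  have h8 : 27 * s ^ 3 ≤ x ^ 3 := by
    have hh := mul_le_mul_of_nonneg_right h7 (sq_nonneg x)
    nlinarith
  have h9 : 3 * s ≤ x := by
    have h27 : (3 * s) ^ 3 ≤ x ^ 3 := by nlinarith
    exact (pow_le_pow_iff_left₀ (by linarith) hxnn (by norm_num)).mp h27
  have hmk : (0:ℝ) ≤ 27 * (m : ℝ) * K ^ 2 := by positivity
  have := le_abs_self c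
  linarith
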